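/- Under the symmetric MS-selection policy, for every q ∈ 𝒬 the number Q̃_q := |{j ∈ 𝒬 : M_{q,j} ≥ 1}| of MSs served by at least one S-RRH that serves MS-q satisfies Q̃_q = min(Q, 2Q − L − 2Q̄) = min(Q, (2 − 1/M)·Q − 2Q̄). -/

import Mathlib

open scoped Classical

/-- The unique representative in `{1, …, M}` of `j` modulo `M` (for `j ≥ 1`). -/
def sigmaRep (M j : ℕ) : ℕ := (j - 1) % M + 1

/-- The index `m ∈ {1, …, M}` of the block `𝒬_m = {(m−1)L+1, …, mL}` containing `q`. -/
def blk (L q : ℕ) : ℕ := (q - 1) / L + 1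

/-- `q ∈ S̄_m = ⋃_{i=1}^{K} 𝒬_{σ(i+m)}`: MS-`q` is discarded by S-RRH-`m`
under the symmetric MS-selection policy. -/
def discardedBy (M L K m q : ℕ) : Prop :=
  ∃ i ∈ Finset.Icc 1 K, blk L q = sigmaRep M (i + m)

/-- S-RRH-`m` serves MS-`q`. -/
def servesMS (M L K m q : ℕ) : Prop := ¬ discardedBy M L K m q

/-- `M_q`: the number of S-RRHs serving MS-`q`. -/
noncomputable def numServing (M L K q : ℕ) : ℕ :=
  ((Finset.Icc 1 M).filter fun m => servesMS M L K m q).card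

/-- `M_{q,j}`: the number of S-RRHs serving both MS-`q` and MS-`j`. -/
noncomputable def numServingBoth (M L K q j : ℕ) : ℕ :=
  ((Finset.Icc 1 M).filter fun m => servesMS M L K m q ∧ servesMS M L K m j).card

/-- `Q̃_q`: the number of MSs served by at least one S-RRH that serves MS-`q`. -/
noncomputable def numQtilde (M L K Q q : ℕ) : ℕ :=
  ((Finset.Icc 1 Q).filter fun j => 1 ≤ numServingBoth M L K q j).card

namespace Stmt19Aux

/-- residue of `b - m` mod `M`, written without natural subtraction. -/
def cc (M b m : ℕ) : ℕ := (b + m * (M - 1)) % M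

lemma cc_lt {M : ℕ} (hM : 0 < M) (b m : ℕ) : cc M b m < M := Nat.mod_lt _ hM

lemma cc_modeq {M : ℕ} (hM : 0 < M) (b m : ℕ) : cc M b m + m ≡ b [MOD M] := by
  have h1 : cc M b m ≡ b + m * (M - 1) [MOD M] := Nat.mod_modEq _ _
  have h2 : cc M b m + m ≡ b + m * (M - 1) + m [MOD M] := h1.add_right m
  have h3 : b + m * (M - 1) + m = b + m * M := by
    cases M with
    | zero => omega
    | succ n => simp [Nat.succ_sub_one, Nat.mul_succ]; omega
  rw [h3] at h2
  have h4 : b + m * M ≡ b [MOD M] := by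
    unfold Nat.ModEq
    simp [Nat.add_mul_mod_self_right]
  exact h2.trans h4

lemma cc_unique {M b m c : ℕ} (hM : 0 < M) (hc : c < M) (h : c + m ≡ b [MOD M]) :
    cc M b m = c := by
  have h1 := cc_modeq hM b m
  have h2 : cc M b m + m ≡ c + m [MOD M] := h1.trans h.symm
  have h3 : cc M b m ≡ c [MOD M] := Nat.ModEq.add_right_cancel' m h2
  have h4 := cc_lt hM b m
  unfold Nat.ModEq at h3
  rwa [Nat.mod_eq_of_lt h4, Nat.mod_eq_of_lt hc] at h3

lemma disc_iff {M K m b : ℕ} (hM : 0 < M) (hK : K < M) (hm : 1 ≤ m)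
    (hb1 : 1 ≤ b) (hbM : b ≤ M) :
    (∃ i ∈ Finset.Icc 1 K, b = sigmaRep M (i + m)) ↔ cc M b m ∈ Finset.Icc 1 K := by
  constructor
  · rintro ⟨i, hi, hbi⟩
    simp only [Finset.mem_Icc] at hi ⊢
    have hlt : i < M := lt_of_le_of_lt hi.2 hK
    have h1 : i + m ≡ b [MOD M] := by
      have hmod : (i + m - 1) % M = b - 1 := by
        unfold sigmaRep at hbi; omega
      have h2 : i + m - 1 ≡ b - 1 [MOD M] := by
        unfold Nat.ModEq
        rw [hmod, Nat.mod_eq_of_lt (by omega : b - 1 < M)]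
      have h3 := h2.add_right 1
      have e1 : i + m - 1 + 1 = i + m := by omega
      have e2 : b - 1 + 1 = b := by omega
      rwa [e1, e2] at h3
    rw [cc_unique hM hlt h1]
    exact hi
  · intro h
    refine ⟨cc M b m, h, ?_⟩
    have h1 := cc_modeq hM b m
    simp only [Finset.mem_Icc] at h
    have h2 : cc M b m + m - 1 ≡ b - 1 [MOD M] := by
      apply Nat.ModEq.add_right_cancel' 1
      have e1 : cc M b m + m - 1 + 1 = cc M b m + m := by omega
      have e2 : b - 1 + 1 = b := by omega
      rw [e1, e2]; exact h1
    unfold sigmaRep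
    unfold Nat.ModEq at h2
    rw [Nat.mod_eq_of_lt (by omega : b - 1 < M)] at h2
    omega

lemma serves_iff {M L K m q : ℕ} (hM : 0 < M) (hK : K < M) (hm : 1 ≤ m)
    (hb1 : 1 ≤ blk L q) (hbM : blk L q ≤ M) :
    servesMS M L K m q ↔ cc M (blk L q) m ∉ Finset.Icc 1 K := by
  unfold servesMS discardedBy
  exact not_congr (disc_iff hM hK hm hb1 hbM)

lemma exists_m {M : ℕ} (hM : 0 < M) (b c : ℕ) (hc : c < M) :
    ∃ m ∈ Finset.Icc 1 M, cc M b m = c := by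
  by_cases h : cc M b c = 0
  · refine ⟨M, by simp only [Finset.mem_Icc]; omega, ?_⟩
    apply cc_unique hM hc
    have h1 := cc_modeq hM b c
    rw [h, zero_add] at h1
    have h2 : c + M ≡ c [MOD M] := by
      unfold Nat.ModEq; simp [Nat.add_mod_right]
    exact h2.trans h1
  · refine ⟨cc M b c, ?_, ?_⟩
    · simp only [Finset.mem_Icc]
      have := cc_lt hM b c
      omega
    · apply cc_unique hM hc
      have h1 := cc_modeq hM b c
      rwa [add_comm]

lemma cc_add {M b b' m : ℕ} (hM : 0 < M) :
    cc M b' m = (cc M b m + cc M b' b) % M := by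
  apply cc_unique hM (Nat.mod_lt _ hM)
  have h1 : (cc M b m + cc M b' b) % M + m ≡ cc M b m + cc M b' b + m [MOD M] :=
    (Nat.mod_modEq _ _).add_right m
  have h2 : cc M b m + cc M b' b + m = cc M b m + m + cc M b' b := by omega
  rw [h2] at h1
  have h3 : cc M b m + m + cc M b' b ≡ b + cc M b' b [MOD M] :=
    (cc_modeq hM b m).add_right _
  have h4 : b + cc M b' b ≡ b' [MOD M] := by
    have h5 := cc_modeq hM b' b
    rwa [add_comm] at h5
  exact h1.trans (h3.trans h4)

lemma good_iff {M K b b' : ℕ} (hM : 0 < M) (hK1 : 1 ≤ K) (hK : K < M) :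
    (∃ m ∈ Finset.Icc 1 M, cc M b m ∉ Finset.Icc 1 K ∧ cc M b' m ∉ Finset.Icc 1 K) ↔
      cc M b' b ∉ Finset.Icc (M - K) K := by
  have hδlt : cc M b' b < M := cc_lt hM b' b
  constructor
  · rintro ⟨m, hm, hc, hc'⟩ hbad
    simp only [Finset.mem_Icc] at hbad hc hc'
    push_neg at hc hc'
    have hclt := cc_lt hM b m
    have hrel : cc M b' m = (cc M b m + cc M b' b) % M := cc_add hM
    rcases Nat.eq_zero_or_pos (cc M b m) with h0 | hpos
    · rw [h0, zero_add, Nat.mod_eq_of_lt hδlt] at hrel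
      omega
    · have hge : K + 1 ≤ cc M b m := by
        rcases Nat.lt_or_ge K (cc M b m) with h | h
        · omega
        · exact absurd (hc hpos) (by omega)
      have hmod : (cc M b m + cc M b' b) % M = cc M b m + cc M b' b - M := by
        rw [Nat.mod_eq_sub_mod (by omega), Nat.mod_eq_of_lt (by omega)]
      rw [hmod] at hrel
      omega
  · intro hgood
    simp only [Finset.mem_Icc, not_and, not_le] at hgood
    rcases Nat.lt_or_ge (cc M b' b) (M - K) with hsmall | hbig
    · rcases Nat.eq_zero_or_pos (cc M b' b) with h0 | hpos
      · obtain ⟨m, hm, hcm⟩ := exists_m hM b 0 hM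
        refine ⟨m, hm, ?_, ?_⟩
        · rw [hcm]; simp
        · have h2 : cc M b' m = (0 + 0) % M := by rw [cc_add hM (b := b), hcm, h0]
          rw [h2]; simp [Finset.mem_Icc]
      · obtain ⟨m, hm, hcm⟩ := exists_m hM b (M - cc M b' b) (by omega)
        refine ⟨m, hm, ?_, ?_⟩
        · rw [hcm]; simp only [Finset.mem_Icc]; omega
        · have h2 : cc M b' m = (M - cc M b' b + cc M b' b) % M := by
            rw [cc_add hM (b := b), hcm]
          rw [Nat.sub_add_cancel (le_of_lt hδlt), Nat.mod_self] at h2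
          rw [h2]; simp [Finset.mem_Icc]
    · have hKδ : K < cc M b' b := hgood hbig
      obtain ⟨m, hm, hcm⟩ := exists_m hM b 0 hM
      refine ⟨m, hm, ?_, ?_⟩
      · rw [hcm]; simp
      · have h2 : cc M b' m = (0 + cc M b' b) % M := by rw [cc_add hM (b := b), hcm]
        rw [zero_add, Nat.mod_eq_of_lt hδlt] at h2
        rw [h2]; simp only [Finset.mem_Icc]; omega

lemma blk_bounds {L M q : ℕ} (hL : 0 < L) (hq1 : 1 ≤ q) (hqQ : q ≤ M * L) :
    1 ≤ blk L q ∧ blk L q ≤ M := by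
  unfold blk
  refine ⟨Nat.le_add_left 1 _, ?_⟩
  have h : (q - 1) / L < M := by
    rw [Nat.div_lt_iff_lt_mul hL]
    calc q - 1 < q := by omega
      _ ≤ M * L := hqQ
  omega

lemma blk_of {L b r : ℕ} (hL : 0 < L) (hb1 : 1 ≤ b) (hr1 : 1 ≤ r) (hrL : r ≤ L) :
    blk L ((b - 1) * L + r) = b := by
  unfold blk
  have e : (b - 1) * L + r - 1 = L * (b - 1) + (r - 1) := by
    rw [mul_comm]
    exact Nat.add_sub_assoc hr1 _
  rw [e, Nat.mul_add_div hL, Nat.div_eq_of_lt (by omega)]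
  omega

lemma count_blocks {M L : ℕ} (hL : 0 < L) (P : ℕ → Prop) :
    ((Finset.Icc 1 (M * L)).filter fun j => P (blk L j)).card
      = L * ((Finset.Icc 1 M).filter P).card := by
  have hcard : L * ((Finset.Icc 1 M).filter P).card
      = (((Finset.Icc 1 M).filter P) ×ˢ Finset.Icc 1 L).card := by
    rw [Finset.card_product, Nat.card_Icc]
    have h1 : L + 1 - 1 = L := by omega
    rw [h1, mul_comm]
  rw [hcard]
  apply Finset.card_nbij' (i := fun j => (blk L j, (j - 1) % L + 1))
    (j := fun p => (p.1 - 1) * L + p.2)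
  · intro j hj
    simp only [Finset.mem_coe, Finset.mem_filter, Finset.mem_Icc] at hj
    obtain ⟨⟨hj1, hj2⟩, hP⟩ := hj
    have hb := blk_bounds hL hj1 hj2
    simp only [Finset.mem_coe, Finset.mem_product, Finset.mem_filter, Finset.mem_Icc]
    refine ⟨⟨⟨hb.1, hb.2⟩, hP⟩, by omega, ?_⟩
    have := Nat.mod_lt (j - 1) hL
    omega
  · rintro ⟨b, r⟩ hp
    simp only [Finset.mem_coe, Finset.mem_product, Finset.mem_filter, Finset.mem_Icc] at hp
    obtain ⟨⟨⟨hb1, hbM⟩, hP⟩, hr1, hrL⟩ := hp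
    simp only [Finset.mem_coe, Finset.mem_filter, Finset.mem_Icc]
    have hblk := blk_of hL hb1 hr1 hrL
    refine ⟨⟨by omega, ?_⟩, by rw [hblk]; exact hP⟩
    obtain ⟨b', rfl⟩ : ∃ b', b = b' + 1 := ⟨b - 1, by omega⟩
    simp only [Nat.add_sub_cancel]
    calc b' * L + r ≤ b' * L + L := by omega
      _ = (b' + 1) * L := by ring
      _ ≤ M * L := Nat.mul_le_mul_right _ hbM
  · intro j hj
    simp only [Finset.mem_coe, Finset.mem_filter, Finset.mem_Icc] at hj
    obtain ⟨⟨hj1, _⟩, _⟩ := hj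
    simp only [blk, Nat.add_sub_cancel]
    have h := Nat.div_add_mod (j - 1) L
    set x := L * ((j - 1) / L) with hx
    have : (j - 1) / L * L = x := by rw [hx, mul_comm]
    omega
  · rintro ⟨b, r⟩ hp
    simp only [Finset.mem_coe, Finset.mem_product, Finset.mem_filter, Finset.mem_Icc] at hp
    obtain ⟨⟨⟨hb1, hbM⟩, hP⟩, hr1, hrL⟩ := hp
    have hblk := blk_of hL hb1 hr1 hrL
    have hmod : ((b - 1) * L + r - 1) % L + 1 = r := by
      have e : (b - 1) * L + r - 1 = (r - 1) + (b - 1) * L := by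
        rw [mul_comm]
        have := Nat.add_sub_assoc hr1 (L * (b - 1))
        omega
      rw [e, Nat.add_mul_mod_self_right, Nat.mod_eq_of_lt (by omega)]
      omega
    simp only [Prod.mk.injEq]
    exact ⟨hblk, hmod⟩

lemma modeq_eq_of_Icc {M a b : ℕ} (ha1 : 1 ≤ a) (haM : a ≤ M) (hb1 : 1 ≤ b)
    (hbM : b ≤ M) (h : a ≡ b [MOD M]) : a = b := by
  have h2 : a - 1 ≡ b - 1 [MOD M] := by
    apply Nat.ModEq.add_right_cancel' 1
    have e1 : a - 1 + 1 = a := by omega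
    have e2 : b - 1 + 1 = b := by omega
    rw [e1, e2]; exact h
  unfold Nat.ModEq at h2
  rw [Nat.mod_eq_of_lt (by omega : a - 1 < M), Nat.mod_eq_of_lt (by omega : b - 1 < M)] at h2
  omega

lemma wrap_modeq {M : ℕ} {x : ℕ} (hx : 1 ≤ x) : (x - 1) % M + 1 ≡ x [MOD M] := by
  have h : (x - 1) % M ≡ x - 1 [MOD M] := Nat.mod_modEq _ _
  have h2 := h.add_right 1
  rwa [Nat.sub_add_cancel hx] at h2

lemma count_delta {M : ℕ} (hM : 0 < M) (bq : ℕ) (hbq1 : 1 ≤ bq) (hbqM : bq ≤ M)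
    (T : Finset ℕ) :
    ((Finset.Icc 1 M).filter fun b => cc M b bq ∉ T).card
      = ((Finset.range M).filter fun d => d ∉ T).card := by
  apply Finset.card_nbij' (i := fun b => cc M b bq)
    (j := fun d => (d + bq - 1) % M + 1)
  · intro b hb
    simp only [Finset.mem_coe, Finset.mem_filter, Finset.mem_Icc, Finset.mem_range] at hb ⊢
    exact ⟨cc_lt hM b bq, hb.2⟩
  · intro d hd
    simp only [Finset.mem_coe, Finset.mem_filter, Finset.mem_range] at hd
    obtain ⟨hdM, hdT⟩ := hd
    have hmem : 1 ≤ (d + bq - 1) % M + 1 ∧ (d + bq - 1) % M + 1 ≤ M := by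
      have := Nat.mod_lt (d + bq - 1) hM
      omega
    have hcc : cc M ((d + bq - 1) % M + 1) bq = d := by
      apply cc_unique hM hdM
      exact (wrap_modeq (by omega)).symm
    simp only [Finset.mem_coe, Finset.mem_filter, Finset.mem_Icc]
    exact ⟨⟨hmem.1, hmem.2⟩, by rw [hcc]; exact hdT⟩
  · intro b hb
    simp only [Finset.mem_coe, Finset.mem_filter, Finset.mem_Icc] at hb
    obtain ⟨⟨hb1, hbM⟩, _⟩ := hb
    have h1 : cc M b bq + bq ≡ b [MOD M] := cc_modeq hM b bq
    have h2 : (cc M b bq + bq - 1) % M + 1 ≡ b [MOD M] :=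
      (wrap_modeq (by omega)).trans h1
    apply modeq_eq_of_Icc _ _ hb1 hbM h2
    · omega
    · have := Nat.mod_lt (cc M b bq + bq - 1) hM
      omega
  · intro d hd
    simp only [Finset.mem_coe, Finset.mem_filter, Finset.mem_range] at hd
    apply cc_unique hM hd.1
    exact (wrap_modeq (by omega)).symm

end Stmt19Aux

open Stmt19Aux in
/-- Under the symmetric MS-selection policy,
`Q̃_q = min(Q, 2Q − L − 2Q̄) = min(Q, (2 − 1/M)·Q − 2Q̄)`. -/
theorem stmt_19 (M Q Qbar L K : ℕ) (hM : 0 < M) (hQ : 0 < Q) (hQbar : 0 < Qbar)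
    (hlt : Qbar < Q) (hL : Q = M * L) (hK : K * Q = M * Qbar) :
    ∀ q ∈ Finset.Icc 1 Q,
      (numQtilde M L K Q q : ℚ) =
          min (Q : ℚ) (2 * (Q : ℚ) - (L : ℚ) - 2 * (Qbar : ℚ)) ∧
        (numQtilde M L K Q q : ℚ) =
          min (Q : ℚ) ((2 - 1 / (M : ℚ)) * (Q : ℚ) - 2 * (Qbar : ℚ)) := by
  intro q hq
  simp only [Finset.mem_Icc] at hq
  -- basic facts
  have hL0 : 0 < L := by
    rcases Nat.eq_zero_or_pos L with h | h
    · subst h; simp at hL; omega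
    · exact h
  have hKL : K * L = Qbar := by
    have h1 : M * (K * L) = M * Qbar := by
      rw [← hK, hL]; ring
    exact Nat.eq_of_mul_eq_mul_left hM h1
  have hK0 : 0 < K := by
    rcases Nat.eq_zero_or_pos K with h | h
    · subst h; simp at hKL; omega
    · exact h
  have hKM : K < M := by
    by_contra h
    push_neg at h
    have : M * L ≤ K * L := Nat.mul_le_mul_right _ h
    omega
  have hqQ : q ≤ M * L := hL ▸ hq.2
  have hbq := blk_bounds hL0 hq.1 hqQ
  set bq := blk L q with hbqdef
  -- rewrite the predicate
  have hpred : ∀ j ∈ Finset.Icc 1 Q,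
      (1 ≤ numServingBoth M L K q j ↔ cc M (blk L j) bq ∉ Finset.Icc (M - K) K) := by
    intro j hj
    simp only [Finset.mem_Icc] at hj
    have hbj := blk_bounds hL0 hj.1 (hL ▸ hj.2)
    have h1 : 1 ≤ numServingBoth M L K q j ↔
        ∃ m ∈ Finset.Icc 1 M, servesMS M L K m q ∧ servesMS M L K m j := by
      unfold numServingBoth
      constructor
      · intro h
        obtain ⟨m, hm⟩ := Finset.card_pos.mp h
        rw [Finset.mem_filter] at hm
        exact ⟨m, hm.1, hm.2⟩
      · rintro ⟨m, hm, ha, hb⟩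
        exact Finset.card_pos.mpr ⟨m, Finset.mem_filter.mpr ⟨hm, ha, hb⟩⟩
    rw [h1]
    have h2 : (∃ m ∈ Finset.Icc 1 M, servesMS M L K m q ∧ servesMS M L K m j) ↔
        ∃ m ∈ Finset.Icc 1 M, cc M bq m ∉ Finset.Icc 1 K ∧
          cc M (blk L j) m ∉ Finset.Icc 1 K := by
      constructor
      · rintro ⟨m, hm, ha, hb⟩
        have hm' := Finset.mem_Icc.mp hm
        exact ⟨m, hm, (serves_iff hM hKM hm'.1 hbq.1 hbq.2).mp ha,
          (serves_iff hM hKM hm'.1 hbj.1 hbj.2).mp hb⟩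
      · rintro ⟨m, hm, ha, hb⟩
        have hm' := Finset.mem_Icc.mp hm
        exact ⟨m, hm, (serves_iff hM hKM hm'.1 hbq.1 hbq.2).mpr ha,
          (serves_iff hM hKM hm'.1 hbj.1 hbj.2).mpr hb⟩
    rw [h2]
    exact good_iff hM hK0 hKM
  -- compute numQtilde
  have hcount : numQtilde M L K Q q
      = L * ((Finset.Icc 1 M).filter fun b => cc M b bq ∉ Finset.Icc (M - K) K).card := by
    unfold numQtilde
    rw [Finset.filter_congr hpred, hL]
    convert count_blocks (M := M) hL0 (fun b => cc M b bq ∉ Finset.Icc (M - K) K) using 2 <;> congr!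
  have hdelta : ((Finset.Icc 1 M).filter fun b => cc M b bq ∉ Finset.Icc (M - K) K).card
      = ((Finset.range M).filter fun d => d ∉ Finset.Icc (M - K) K).card :=
    count_delta hM bq hbq.1 hbq.2 _
  have hrange : ((Finset.range M).filter fun d => d ∉ Finset.Icc (M - K) K).card
      = M - (K + 1 - (M - K)) := by
    rw [Finset.filter_not, Finset.card_sdiff_of_subset (Finset.filter_subset _ _)]
    have hfil : (Finset.range M).filter (fun d => d ∈ Finset.Icc (M - K) K)
        = Finset.Icc (M - K) K := by
      ext d
      simp only [Finset.mem_filter, Finset.mem_range, Finset.mem_Icc]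
      omega
    rw [hfil, Nat.card_Icc, Finset.card_range]
  have hkey : numQtilde M L K Q q = L * (M - (K + 1 - (M - K))) := by
    rw [hcount, hdelta, hrange]
  -- cast facts
  have hQc : (Q : ℚ) = (M : ℚ) * L := by rw [hL]; push_cast; ring
  have hQbarc : (Qbar : ℚ) = (K : ℚ) * L := by rw [← hKL]; push_cast; ring
  have hLpos : (0 : ℚ) < L := by exact_mod_cast hL0
  have hmain : (numQtilde M L K Q q : ℚ)
      = min (Q : ℚ) (2 * (Q : ℚ) - (L : ℚ) - 2 * (Qbar : ℚ)) := by
    by_cases hcase : 2 * K + 1 ≤ M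
    · have hz : K + 1 - (M - K) = 0 := by omega
      rw [hkey, hz, Nat.sub_zero]
      have hMc : (2 * K + 1 : ℚ) ≤ M := by exact_mod_cast hcase
      have hle : (Q : ℚ) ≤ 2 * (Q : ℚ) - L - 2 * Qbar := by
        have h1 : (2 * K + 1 : ℚ) * L ≤ (M : ℚ) * L :=
          mul_le_mul_of_nonneg_right hMc (le_of_lt hLpos)
        rw [hQc, hQbarc]
        nlinarith [h1]
      rw [min_eq_left hle]
      rw [hQc]
      push_cast
      ring
    · push_neg at hcase
      have hg : M - (K + 1 - (M - K)) = 2 * M - 2 * K - 1 := by omega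
      rw [hkey, hg]
      have hMc : (M : ℚ) ≤ 2 * K := by
        have : M ≤ 2 * K := by omega
        exact_mod_cast this
      have hle : 2 * (Q : ℚ) - L - 2 * Qbar ≤ Q := by
        have h1 : (M : ℚ) * L ≤ (2 * K : ℚ) * L :=
          mul_le_mul_of_nonneg_right hMc (le_of_lt hLpos)
        rw [hQc, hQbarc]
        nlinarith [h1]
      rw [min_eq_right hle]
      have hn : (2 * M - 2 * K - 1) + 2 * K + 1 = 2 * M := by omega
      have hnq : ((2 * M - 2 * K - 1 : ℕ) : ℚ) = 2 * (M : ℚ) - 2 * K - 1 := by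
        have h2 : (((2 * M - 2 * K - 1) + 2 * K + 1 : ℕ) : ℚ) = ((2 * M : ℕ) : ℚ) := by
          rw [hn]
        push_cast at h2
        linarith
      rw [Nat.cast_mul, hnq, hQc, hQbarc]
      ring
  have hMne : (M : ℚ) ≠ 0 := by
    exact_mod_cast hM.ne'
  have heq2 : (2 - 1 / (M : ℚ)) * (Q : ℚ) - 2 * Qbar
      = 2 * (Q : ℚ) - L - 2 * Qbar := by
    rw [hQc]
    field_simp
  exact ⟨hmain, by rw [heq2]; exact hmain⟩
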